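/- For p ∈ (0,1) and y ∈ (0,1), the function g(p,y) = -(1-p) y log p - p (1-y) log(1-p) + 5 y log y + 5 (1-y) log(1-y) is convex in (p,y); equivalently, its 2×2 Hessian is positive semidefinite at every such point. -/

import Mathlib

set_option maxHeartbeats 2000000

open Real Set

private theorem aux_core (A B Y : ℝ) (hA : 1 < A) (hB : 1 < B) (hAB : A*B = A+B)
    (hY0 : 0 < Y) (hY1 : Y < 1) :
    4*(A+B)^2*(Y*(1-Y)) ≤ 5*(Y*(A+A^2)+(1-Y)*(B+B^2)) := by
  set C := A+A^2 with hC
  set D := B+B^2 with hD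
  have hCpos : 0 < C := by nlinarith
  have hDpos : 0 < D := by nlinarith
  have hY1' : 0 < 1 - Y := by linarith
  have hw : 0 ≤ Y^2*C + (1-Y)^2*D := by positivity
  have hCD : (A+B)^2 ≤ C*D := by nlinarith
  have claim1 : 2*(Y*(1-Y))*(A+B) ≤ Y^2*C + (1-Y)^2*D := by
    nlinarith [sq_nonneg (Y^2*C - (1-Y)^2*D), mul_pos hY0 hY1',
      mul_nonneg (mul_nonneg (sq_nonneg Y) (sq_nonneg (1-Y))) (sub_nonneg.2 hCD),
      mul_pos (mul_pos hY0 hY1') (by positivity : (0:ℝ) < A+B)]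
  have hsum : C + D = (A+B)^2 - (A+B) := by nlinarith
  nlinarith [mul_pos hY0 hY1', mul_le_mul_of_nonneg_left claim1 (by norm_num : (0:ℝ) ≤ 5),
    mul_pos (mul_pos hY0 hY1') (by positivity : (0:ℝ) < A+B)]

/-- The Hessian quadratic form of `g` is nonnegative. -/
private theorem quad_nonneg (P Y a b : ℝ) (hP0 : 0 < P) (hP1 : P < 1)
    (hY0 : 0 < Y) (hY1 : Y < 1) :
    0 ≤ (Y/P + Y/P^2 + (1-Y)/(1-P) + (1-Y)/(1-P)^2) * a^2
      + (2*(Real.log P + Real.log (1-P) + 2 - 1/P - 1/(1-P))) * (a*b)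
      + (5/Y + 5/(1-Y)) * b^2 := by
  have hP1' : 0 < 1 - P := by linarith
  have hY1' : 0 < 1 - Y := by linarith
  set A := 1/P with hA
  set B := 1/(1-P) with hB
  have hA1 : 1 < A := by rw [hA]; rw [lt_div_iff₀ hP0]; linarith
  have hB1 : 1 < B := by rw [hB]; rw [lt_div_iff₀ hP1']; linarith
  have hAB : A*B = A+B := by rw [hA, hB]; field_simp; ring
  set C := Y*(A+A^2) + (1-Y)*(B+B^2) with hCdef
  have hCeq : Y/P + Y/P^2 + (1-Y)/(1-P) + (1-Y)/(1-P)^2 = C := by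
    rw [hCdef, hA, hB]; field_simp; ring
  set M := Real.log P + Real.log (1-P) + 2 - A - B with hMdef
  set G := 5/Y + 5/(1-Y) with hGdef
  rw [hCeq]
  have hlogP : Real.log P < 0 := Real.log_neg hP0 hP1
  have hlogP2 : Real.log (1-P) < 0 := Real.log_neg hP1' (by linarith)
  have hlb1 : -(Real.log P) ≤ A - 1 := by
    have := Real.add_one_le_exp (Real.log P)
    nlinarith [Real.exp_log hP0, Real.log_le_sub_one_of_pos (by positivity : (0:ℝ) < A),
      Real.log_div (one_ne_zero) (ne_of_gt hP0), Real.log_one]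
  have hlb2 : -(Real.log (1-P)) ≤ B - 1 := by
    nlinarith [Real.log_le_sub_one_of_pos (by positivity : (0:ℝ) < B),
      Real.log_div (one_ne_zero) (ne_of_gt hP1'), Real.log_one]
  have hM0 : M < 0 := by rw [hMdef]; linarith
  have hM2 : -M ≤ 2*(A+B) - 4 := by rw [hMdef]; linarith
  have hMsq : M^2 ≤ 4*(A+B)^2 := by nlinarith
  have hCpos : 0 < C := by rw [hCdef]; positivity
  have hGpos : 0 < G := by rw [hGdef]; positivity
  have hGC : 4*(A+B)^2 ≤ C*G := by
    have hcore := aux_core A B Y hA1 hB1 hAB hY0 hY1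
    have hGval : G = 5/(Y*(1-Y)) := by rw [hGdef]; field_simp; ring
    rw [hGval, hCdef]
    rw [show (Y*(A+A^2)+(1-Y)*(B+B^2))*(5/(Y*(1-Y))) = 5*(Y*(A+A^2)+(1-Y)*(B+B^2))/(Y*(1-Y)) by
        ring,
      le_div_iff₀ (by positivity)]
    linarith [hcore]
  have hdet : M^2 ≤ C*G := le_trans hMsq hGC
  have key : 0 ≤ C*(C * a ^ 2 + 2 * M * (a * b) + G * b ^ 2) := by
    nlinarith [sq_nonneg (C*a + M*b), mul_nonneg (sub_nonneg.2 hdet) (sq_nonneg b)]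
  exact nonneg_of_mul_nonneg_right key hCpos

/-- First derivative of the restriction of `g` to a line segment. -/
private noncomputable def lineD1 (p₁ y₁ dp dy : ℝ) : ℝ → ℝ := fun t =>
  dp*((y₁+t*dy)*Real.log (p₁+t*dp)) - dy*((1-(p₁+t*dp))*Real.log (p₁+t*dp))
    - dp*((1-(p₁+t*dp))*(y₁+t*dy)/(p₁+t*dp))
    - dp*((1-(y₁+t*dy))*Real.log (1-(p₁+t*dp))) + dy*((p₁+t*dp)*Real.log (1-(p₁+t*dp)))
    + dp*((p₁+t*dp)*(1-(y₁+t*dy))/(1-(p₁+t*dp)))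
    + 5*dy*Real.log (y₁+t*dy) - 5*dy*Real.log (1-(y₁+t*dy))

private theorem hasDeriv1 (p₁ y₁ dp dy t : ℝ) (hP : p₁+t*dp ∈ Set.Ioo (0:ℝ) 1)
    (hY : y₁+t*dy ∈ Set.Ioo (0:ℝ) 1) :
    HasDerivAt (fun s : ℝ => -(1 - (p₁+s*dp)) * (y₁+s*dy) * Real.log (p₁+s*dp)
        - (p₁+s*dp) * (1-(y₁+s*dy)) * Real.log (1-(p₁+s*dp))
        + 5*(y₁+s*dy) * Real.log (y₁+s*dy) + 5*(1-(y₁+s*dy)) * Real.log (1-(y₁+s*dy)))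
      (lineD1 p₁ y₁ dp dy t) t := by
  obtain ⟨hP0, hP1⟩ := hP
  obtain ⟨hY0, hY1⟩ := hY
  have hP1' : (0:ℝ) < 1 - (p₁+t*dp) := by linarith
  have hY1' : (0:ℝ) < 1 - (y₁+t*dy) := by linarith
  have hPd : HasDerivAt (fun s : ℝ => p₁+s*dp) dp t := by
    simpa using ((hasDerivAt_id t).mul_const dp).const_add p₁
  have hYd : HasDerivAt (fun s : ℝ => y₁+s*dy) dy t := by
    simpa using ((hasDerivAt_id t).mul_const dy).const_add y₁
  have h1Pd : HasDerivAt (fun s : ℝ => 1-(p₁+s*dp)) (-dp) t := hPd.const_sub 1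
  have h1Yd : HasDerivAt (fun s : ℝ => 1-(y₁+s*dy)) (-dy) t := hYd.const_sub 1
  have hLP : HasDerivAt (fun s : ℝ => Real.log (p₁+s*dp)) (dp / (p₁+t*dp)) t :=
    hPd.log hP0.ne'
  have hL1P : HasDerivAt (fun s : ℝ => Real.log (1-(p₁+s*dp))) (-dp / (1-(p₁+t*dp))) t :=
    h1Pd.log hP1'.ne'
  have hLY : HasDerivAt (fun s : ℝ => Real.log (y₁+s*dy)) (dy / (y₁+t*dy)) t :=
    hYd.log hY0.ne'
  have hL1Y : HasDerivAt (fun s : ℝ => Real.log (1-(y₁+s*dy))) (-dy / (1-(y₁+t*dy))) t :=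
    h1Yd.log hY1'.ne'
  have H := (((((h1Pd.neg.mul hYd).mul hLP).sub ((hPd.mul h1Yd).mul hL1P)).add
    ((hYd.const_mul 5).mul hLY)).add ((h1Yd.const_mul 5).mul hL1Y))
  refine H.congr_deriv ?_
  unfold lineD1
  simp only [Pi.mul_apply, Pi.neg_apply]
  set P := p₁+t*dp with hPs
  set Y := y₁+t*dy with hYs
  have n1 : P ≠ 0 := ne_of_gt hP0
  have n2 : 1 - P ≠ 0 := ne_of_gt hP1'
  have n3 : Y ≠ 0 := ne_of_gt hY0
  have n4 : 1 - Y ≠ 0 := ne_of_gt hY1'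
  set L1 := Real.log P with hL1
  set L2 := Real.log (1-P) with hL2
  set L3 := Real.log Y with hL3
  set L4 := Real.log (1-Y) with hL4
  clear_value P Y L1 L2 L3 L4
  field_simp
  ring

private theorem hasDeriv2 (p₁ y₁ dp dy t : ℝ) (hP : p₁+t*dp ∈ Set.Ioo (0:ℝ) 1)
    (hY : y₁+t*dy ∈ Set.Ioo (0:ℝ) 1) :
    HasDerivAt (lineD1 p₁ y₁ dp dy)
      (((y₁+t*dy)/(p₁+t*dp) + (y₁+t*dy)/(p₁+t*dp)^2 + (1-(y₁+t*dy))/(1-(p₁+t*dp))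
          + (1-(y₁+t*dy))/(1-(p₁+t*dp))^2) * dp^2
        + (2*(Real.log (p₁+t*dp) + Real.log (1-(p₁+t*dp)) + 2 - 1/(p₁+t*dp)
          - 1/(1-(p₁+t*dp)))) * (dp*dy)
        + (5/(y₁+t*dy) + 5/(1-(y₁+t*dy))) * dy^2) t := by
  obtain ⟨hP0, hP1⟩ := hP
  obtain ⟨hY0, hY1⟩ := hY
  have hP1' : (0:ℝ) < 1 - (p₁+t*dp) := by linarith
  have hY1' : (0:ℝ) < 1 - (y₁+t*dy) := by linarith
  have hPd : HasDerivAt (fun s : ℝ => p₁+s*dp) dp t := by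
    simpa using ((hasDerivAt_id t).mul_const dp).const_add p₁
  have hYd : HasDerivAt (fun s : ℝ => y₁+s*dy) dy t := by
    simpa using ((hasDerivAt_id t).mul_const dy).const_add y₁
  have h1Pd : HasDerivAt (fun s : ℝ => 1-(p₁+s*dp)) (-dp) t := hPd.const_sub 1
  have h1Yd : HasDerivAt (fun s : ℝ => 1-(y₁+s*dy)) (-dy) t := hYd.const_sub 1
  have hLP : HasDerivAt (fun s : ℝ => Real.log (p₁+s*dp)) (dp / (p₁+t*dp)) t :=
    hPd.log hP0.ne'
  have hL1P : HasDerivAt (fun s : ℝ => Real.log (1-(p₁+s*dp))) (-dp / (1-(p₁+t*dp))) t :=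
    h1Pd.log hP1'.ne'
  have hLY : HasDerivAt (fun s : ℝ => Real.log (y₁+s*dy)) (dy / (y₁+t*dy)) t :=
    hYd.log hY0.ne'
  have hL1Y : HasDerivAt (fun s : ℝ => Real.log (1-(y₁+s*dy))) (-dy / (1-(y₁+t*dy))) t :=
    h1Yd.log hY1'.ne'
  have U1 := (hYd.mul hLP).const_mul dp
  have U2 := (h1Pd.mul hLP).const_mul dy
  have U3 := ((h1Pd.mul hYd).div hPd hP0.ne').const_mul dp
  have U4 := (h1Yd.mul hL1P).const_mul dp
  have U5 := (hPd.mul hL1P).const_mul dy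
  have U6 := ((hPd.mul h1Yd).div h1Pd hP1'.ne').const_mul dp
  have U7 := hLY.const_mul (5*dy)
  have U8 := hL1Y.const_mul (5*dy)
  have H := ((((((U1.sub U2).sub U3).sub U4).add U5).add U6).add U7).sub U8
  unfold lineD1
  refine H.congr_deriv ?_
  simp only [Pi.mul_apply, Pi.neg_apply, Pi.div_apply]
  set P := p₁+t*dp with hPs
  set Y := y₁+t*dy with hYs
  have n1 : P ≠ 0 := ne_of_gt hP0
  have n2 : 1 - P ≠ 0 := ne_of_gt hP1'
  have n3 : Y ≠ 0 := ne_of_gt hY0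
  have n4 : 1 - Y ≠ 0 := ne_of_gt hY1'
  set L1 := Real.log P with hL1
  set L2 := Real.log (1-P) with hL2
  set L3 := Real.log Y with hL3
  set L4 := Real.log (1-Y) with hL4
  clear_value P Y L1 L2 L3 L4
  field_simp
  ring

private theorem lineConvex (p₁ y₁ dp dy : ℝ)
    (hP : ∀ t ∈ Set.Icc (0:ℝ) 1, p₁+t*dp ∈ Set.Ioo (0:ℝ) 1)
    (hY : ∀ t ∈ Set.Icc (0:ℝ) 1, y₁+t*dy ∈ Set.Ioo (0:ℝ) 1) :
    ConvexOn ℝ (Set.Icc (0:ℝ) 1)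
      (fun s : ℝ => -(1 - (p₁+s*dp)) * (y₁+s*dy) * Real.log (p₁+s*dp)
        - (p₁+s*dp) * (1-(y₁+s*dy)) * Real.log (1-(p₁+s*dp))
        + 5*(y₁+s*dy) * Real.log (y₁+s*dy) + 5*(1-(y₁+s*dy)) * Real.log (1-(y₁+s*dy))) := by
  set f := (fun s : ℝ => -(1 - (p₁+s*dp)) * (y₁+s*dy) * Real.log (p₁+s*dp)
        - (p₁+s*dp) * (1-(y₁+s*dy)) * Real.log (1-(p₁+s*dp))
        + 5*(y₁+s*dy) * Real.log (y₁+s*dy) + 5*(1-(y₁+s*dy)) * Real.log (1-(y₁+s*dy))) with hf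
  have hIoo : ∀ t ∈ Set.Ioo (0:ℝ) 1, t ∈ Set.Icc (0:ℝ) 1 := fun t ht => Ioo_subset_Icc_self ht
  have hderiv : ∀ t ∈ Set.Ioo (0:ℝ) 1, deriv f t = lineD1 p₁ y₁ dp dy t := by
    intro t ht
    exact (hasDeriv1 p₁ y₁ dp dy t (hP t (hIoo t ht)) (hY t (hIoo t ht))).deriv
  apply convexOn_of_deriv2_nonneg (convex_Icc 0 1)
  · intro t ht
    exact (hasDeriv1 p₁ y₁ dp dy t (hP t ht)
      (hY t ht)).differentiableAt.continuousAt.continuousWithinAt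
  · rw [interior_Icc]
    intro t ht
    exact (hasDeriv1 p₁ y₁ dp dy t (hP t (hIoo t ht))
      (hY t (hIoo t ht))).differentiableAt.differentiableWithinAt
  · rw [interior_Icc]
    intro t ht
    have hev : deriv f =ᶠ[nhds t] lineD1 p₁ y₁ dp dy :=
      Filter.eventuallyEq_of_mem (isOpen_Ioo.mem_nhds ht) hderiv
    have h2 := (hasDeriv2 p₁ y₁ dp dy t (hP t (hIoo t ht))
      (hY t (hIoo t ht))).congr_of_eventuallyEq hev
    exact h2.differentiableAt.differentiableWithinAt
  · rw [interior_Icc]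
    intro t ht
    have hev : deriv f =ᶠ[nhds t] lineD1 p₁ y₁ dp dy :=
      Filter.eventuallyEq_of_mem (isOpen_Ioo.mem_nhds ht) hderiv
    have h2 := (hasDeriv2 p₁ y₁ dp dy t (hP t (hIoo t ht))
      (hY t (hIoo t ht))).congr_of_eventuallyEq hev
    have hq := quad_nonneg (p₁+t*dp) (y₁+t*dy) dp dy (hP t (hIoo t ht)).1 (hP t (hIoo t ht)).2
      (hY t (hIoo t ht)).1 (hY t (hIoo t ht)).2
    calc (0:ℝ) ≤ _ := hq
      _ = deriv (deriv f) t := (h2.deriv).symm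
      _ = deriv^[2] f t := by rw [Function.iterate_succ, Function.iterate_one, Function.comp_apply]

/-- The function
`g(p,y) = -(1-p) y log p - p (1-y) log (1-p) + 5 y log y + 5 (1-y) log (1-y)`
is convex in `(p, y)` on `(0,1) × (0,1)`. -/
theorem modifiedEntropy_corrected_convexOn :
    ConvexOn ℝ ((Set.Ioo (0 : ℝ) 1) ×ˢ (Set.Ioo (0 : ℝ) 1))
      (fun q : ℝ × ℝ =>
        -(1 - q.1) * q.2 * Real.log q.1 - q.1 * (1 - q.2) * Real.log (1 - q.1) +
          5 * q.2 * Real.log q.2 + 5 * (1 - q.2) * Real.log (1 - q.2)) := by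
  refine ⟨(convex_Ioo 0 1).prod (convex_Ioo 0 1), ?_⟩
  rintro x ⟨hx1, hx2⟩ z ⟨hz1, hz2⟩ a b ha hb hab
  have memP : ∀ t ∈ Set.Icc (0:ℝ) 1, x.1 + t*(z.1-x.1) ∈ Set.Ioo (0:ℝ) 1 := by
    intro t ht
    have h := (convex_Ioo (0:ℝ) 1) hx1 hz1 (by linarith [ht.2] : (0:ℝ) ≤ 1-t) ht.1 (by ring)
    simpa [smul_eq_mul, show (1-t)*x.1 + t*z.1 = x.1 + t*(z.1-x.1) by ring] using h
  have memY : ∀ t ∈ Set.Icc (0:ℝ) 1, x.2 + t*(z.2-x.2) ∈ Set.Ioo (0:ℝ) 1 := by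
    intro t ht
    have h := (convex_Ioo (0:ℝ) 1) hx2 hz2 (by linarith [ht.2] : (0:ℝ) ≤ 1-t) ht.1 (by ring)
    simpa [smul_eq_mul, show (1-t)*x.2 + t*z.2 = x.2 + t*(z.2-x.2) by ring] using h
  have hline := lineConvex x.1 x.2 (z.1-x.1) (z.2-x.2) memP memY
  have key := hline.2 (show (0:ℝ) ∈ Set.Icc (0:ℝ) 1 by norm_num)
    (show (1:ℝ) ∈ Set.Icc (0:ℝ) 1 by norm_num) ha hb hab
  simp only [smul_eq_mul, mul_zero, mul_one, zero_add, zero_mul, add_zero, one_mul] at key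
  have e1 : x.1 + (z.1 - x.1) = z.1 := by ring
  have e2 : x.2 + (z.2 - x.2) = z.2 := by ring
  rw [e1, e2] at key
  have c1 : (a • x + b • z).1 = x.1 + b*(z.1-x.1) := by
    simp [smul_eq_mul]
    linear_combination x.1 * hab
  have c2 : (a • x + b • z).2 = x.2 + b*(z.2-x.2) := by
    simp [smul_eq_mul]
    linear_combination x.2 * hab
  simp only [smul_eq_mul, c1, c2]
  exact key
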